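/- (Theorem 1 of the paper) Let the system be x(k+1)=Ax(k)+Bu(k), y(k)=Cx(k), Φ and Γ the standard prediction matrices and Φ_I, Γ_I the integral prediction matrices built from A_I=[[A,0],[CA,I]], B_I=[B;CB], C_I=[0,I]. For inputs u_0,...,u_{N−1} applied from state x_0 with previous accumulated input u_I(k−1) = Σ_{j=0}^{k−1} u(j), define [U_I]_i as the vector with blocks (Σ_{j=0}^{l} u_j) + u_I(k−1) for l = 0,...,i−1. Then for each i = 1,...,N: y_i = [Φ_I]_i x_I(0) + [Γ_I]_i [Δu_0; ...; Δu_{i−1}] = [Φ]_i x_0 + [Γ]_i [U_I]_i, where x_I(0) = [x_0 − x(k−1); y_0] and Δu_j denotes input increments. -/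

import Mathlib

open Matrix

lemma state_solution {p r : Type*} [Fintype p] [Fintype r] [DecidableEq p]
    (M : Matrix p p ℝ) (G : Matrix p r ℝ) (z : ℕ → p → ℝ) (w : ℕ → r → ℝ)
    (h : ∀ j, z (j + 1) = M.mulVec (z j) + G.mulVec (w j)) :
    ∀ i, z i = (M ^ i).mulVec (z 0)
        + ∑ j ∈ Finset.range i, ((M ^ (i - 1 - j)) * G).mulVec (w j) := by
  intro i
  induction i with
  | zero => simp
  | succ i ih =>
      rw [h i, ih, mulVec_add]
      have hpow : M.mulVec ((M ^ i).mulVec (z 0)) = (M ^ (i + 1)).mulVec (z 0) := by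
        rw [mulVec_mulVec, pow_succ']
      rw [hpow, Finset.sum_range_succ]
      have hsum : M.mulVec (∑ j ∈ Finset.range i, ((M ^ (i - 1 - j)) * G).mulVec (w j))
          = ∑ j ∈ Finset.range i, ((M ^ (i - j)) * G).mulVec (w j) := by
        rw [show M.mulVec = M.mulVecLin from rfl, map_sum]
        refine Finset.sum_congr rfl fun j hj => ?_
        have hj' : j < i := Finset.mem_range.mp hj
        have hij : i - j = (i - 1 - j) + 1 := by omega
        rw [mulVecLin_apply, mulVec_mulVec, ← Matrix.mul_assoc, ← pow_succ', hij]
      rw [hsum]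
      have h1 : ∀ j ∈ Finset.range i, ((M ^ (i + 1 - 1 - j)) * G).mulVec (w j)
          = ((M ^ (i - j)) * G).mulVec (w j) := by
        intro j hj
        have : i + 1 - 1 - j = i - j := by omega
        rw [this]
      rw [Finset.sum_congr rfl h1]
      have h2 : ((M ^ (i + 1 - 1 - i)) * G).mulVec (w i) = G.mulVec (w i) := by
        simp
      rw [h2, add_assoc]

/-- Theorem 1: for each i = 1,...,N,
y_i = [Φ_I]_i x_I(0) + [Γ_I]_i [Δu_0;...;Δu_{i−1}] = [Φ]_i x_0 + [Γ]_i [U_I]_i. -/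
theorem integral_prediction_equivalence (n m q N : ℕ)
    (A : Matrix (Fin n) (Fin n) ℝ) (B : Matrix (Fin n) (Fin m) ℝ)
    (C : Matrix (Fin q) (Fin n) ℝ)
    (xprev : Fin n → ℝ) (uI : Fin m → ℝ) (Δu : ℕ → Fin m → ℝ)
    (x : ℕ → Fin n → ℝ) (y : ℕ → Fin q → ℝ)
    (hx0 : x 0 = A.mulVec xprev + B.mulVec uI)
    (hx : ∀ j, x (j + 1) =
      A.mulVec (x j) + B.mulVec (uI + ∑ l ∈ Finset.range (j + 1), Δu l))
    (hy : ∀ j, y j = C.mulVec (x j))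
    (xI0 : Fin n ⊕ Fin q → ℝ)
    (hxI0 : xI0 = Sum.elim (x 0 - xprev) (y 0)) :
    ∀ i : ℕ, 1 ≤ i → i ≤ N →
      (y i = ((fromCols (0 : Matrix (Fin q) (Fin n) ℝ)
                (1 : Matrix (Fin q) (Fin q) ℝ))
              * (fromBlocks A 0 (C * A) (1 : Matrix (Fin q) (Fin q) ℝ)) ^ i).mulVec xI0
            + ∑ j ∈ Finset.range i,
              ((fromCols (0 : Matrix (Fin q) (Fin n) ℝ)
                  (1 : Matrix (Fin q) (Fin q) ℝ))
                * (fromBlocks A 0 (C * A) (1 : Matrix (Fin q) (Fin q) ℝ)) ^ (i - 1 - j)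
                * (fromRows B (C * B))).mulVec (Δu j))
      ∧ y i = (C * A ^ i).mulVec (x 0)
            + ∑ j ∈ Finset.range i,
              (C * A ^ (i - 1 - j) * B).mulVec
                (uI + ∑ l ∈ Finset.range (j + 1), Δu l) := by
  intro i hi1 _hiN
  set AI : Matrix (Fin n ⊕ Fin q) (Fin n ⊕ Fin q) ℝ :=
    fromBlocks A 0 (C * A) (1 : Matrix (Fin q) (Fin q) ℝ) with hAI
  set BI : Matrix (Fin n ⊕ Fin q) (Fin m) ℝ := fromRows B (C * B) with hBI
  set CI : Matrix (Fin q) (Fin n ⊕ Fin q) ℝ :=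
    fromCols (0 : Matrix (Fin q) (Fin n) ℝ) (1 : Matrix (Fin q) (Fin q) ℝ) with hCI
  -- the incremental (integral) state
  set z : ℕ → (Fin n ⊕ Fin q → ℝ) := fun j =>
    Nat.casesOn j xI0 (fun j' => Sum.elim (x (j' + 1) - x j') (y (j' + 1))) with hz
  -- key block computation
  have key : ∀ (v : Fin n → ℝ) (w : Fin q → ℝ) (d : Fin m → ℝ),
      AI.mulVec (Sum.elim v w) + BI.mulVec d
        = Sum.elim (A.mulVec v + B.mulVec d)
            (C.mulVec (A.mulVec v + B.mulVec d) + w) := by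
    intro v w d
    rw [hAI, hBI, fromBlocks_mulVec, fromRows_mulVec]
    ext s
    cases s with
    | inl s =>
        simp [Sum.elim_comp_inl, Sum.elim_comp_inr]
    | inr s =>
        simp [Sum.elim_comp_inl, Sum.elim_comp_inr, mulVec_add, ← mulVec_mulVec]
        ring
  -- key difference facts
  have hdiff : ∀ j, x (j + 2) - x (j + 1)
      = A.mulVec (x (j + 1) - x j) + B.mulVec (Δu (j + 1)) := by
    intro j
    rw [hx (j + 1), hx j, mulVec_sub]
    have hsr : (uI + ∑ l ∈ Finset.range (j + 2), Δu l)
        = (uI + ∑ l ∈ Finset.range (j + 1), Δu l) + Δu (j + 1) := by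
      rw [Finset.sum_range_succ]; abel
    rw [hsr]
    simp only [mulVec_add]
    abel
  have hdiff0 : x 1 - x 0 = A.mulVec (x 0 - xprev) + B.mulVec (Δu 0) := by
    rw [hx 0, hx0, mulVec_sub]
    simp only [zero_add, Finset.sum_range_one, Nat.reduceAdd, mulVec_add]
    abel
  -- recursion for z
  have hrec : ∀ j, z (j + 1) = AI.mulVec (z j) + BI.mulVec (Δu j) := by
    intro j
    cases j with
    | zero =>
        show Sum.elim (x 1 - x 0) (y 1) = AI.mulVec xI0 + BI.mulVec (Δu 0)
        rw [hxI0, key, ← hdiff0]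
        have hb : C.mulVec (x 1 - x 0) + y 0 = y 1 := by
          rw [hy 1, hy 0, mulVec_sub]; abel
        rw [hb]
    | succ j =>
        show Sum.elim (x (j + 2) - x (j + 1)) (y (j + 2))
          = AI.mulVec (Sum.elim (x (j + 1) - x j) (y (j + 1))) + BI.mulVec (Δu (j + 1))
        rw [key, ← hdiff j]
        have hb : C.mulVec (x (j + 2) - x (j + 1)) + y (j + 1) = y (j + 2) := by
          rw [hy (j + 2), hy (j + 1), mulVec_sub]; abel
        rw [hb]
  have hzsol := state_solution AI BI z Δu hrec i
  have hxsol := state_solution A B x (fun j => uI + ∑ l ∈ Finset.range (j + 1), Δu l) hx i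
  constructor
  · -- integral form
    have hyzi : y i = CI.mulVec (z i) := by
      obtain ⟨i', rfl⟩ : ∃ i', i = i' + 1 := ⟨i - 1, by omega⟩
      show y (i' + 1) = CI.mulVec (Sum.elim (x (i' + 1) - x i') (y (i' + 1)))
      rw [hCI, fromCols_mulVec_sumElim]
      simp
    have hz0 : z 0 = xI0 := rfl
    rw [hyzi, hzsol, hz0, mulVec_add, mulVec_mulVec]
    congr 1
    rw [show CI.mulVec = CI.mulVecLin from rfl, map_sum]
    refine Finset.sum_congr rfl fun j _ => ?_
    rw [mulVecLin_apply, mulVec_mulVec, ← Matrix.mul_assoc]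
  · -- standard form
    rw [hy i, hxsol, mulVec_add, mulVec_mulVec]
    congr 1
    rw [show C.mulVec = C.mulVecLin from rfl, map_sum]
    refine Finset.sum_congr rfl fun j _ => ?_
    rw [mulVecLin_apply, mulVec_mulVec, ← Matrix.mul_assoc]
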